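/- Let l(x) = log(1 + exp(-x)). Then for every real x, -l'(x) = 1/(1 + exp(x)), and -l'(x) ≥ min(1/2, l(x)/(2 log 2)). -/

import Mathlib

/-- The logistic (cross-entropy) loss `l(x) = log(1 + e^{-x})`. -/
noncomputable def logisticLoss (x : ℝ) : ℝ := Real.log (1 + Real.exp (-x))

lemma logisticLoss_deriv (x : ℝ) : deriv logisticLoss x = -(1 / (1 + Real.exp x)) := by
  have hpos : (0:ℝ) < 1 + Real.exp (-x) := by positivity
  have h1 : HasDerivAt (fun y : ℝ => -y) (-1) x := (hasDerivAt_id x).neg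
  have h2 : HasDerivAt (fun y : ℝ => 1 + Real.exp (-y)) (Real.exp (-x) * (-1)) x :=
    (h1.exp).const_add 1
  have h3 : HasDerivAt logisticLoss ((Real.exp (-x) * (-1)) / (1 + Real.exp (-x))) x :=
    h2.log (ne_of_gt hpos)
  rw [h3.deriv]
  rw [Real.exp_neg]
  have he : Real.exp x ≠ 0 := Real.exp_ne_zero x
  have hne : 1 + Real.exp x ≠ 0 := by positivity
  field_simp
  ring

theorem stmt_3 (x : ℝ) :
    -deriv logisticLoss x = 1 / (1 + Real.exp x) ∧
    -deriv logisticLoss x ≥ min (1 / 2) (logisticLoss x / (2 * Real.log 2)) := by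
  have hd : -deriv logisticLoss x = 1 / (1 + Real.exp x) := by
    rw [logisticLoss_deriv]; ring
  refine ⟨hd, ?_⟩
  rw [hd]
  by_cases hx : x ≤ 0
  · -- exp x ≤ 1, so 1/(1+exp x) ≥ 1/2
    have h1 : Real.exp x ≤ 1 := Real.exp_le_one_iff.mpr hx
    have h2 : (1:ℝ)/2 ≤ 1 / (1 + Real.exp x) := by
      apply div_le_div_of_nonneg_left (by norm_num) (by positivity)
      linarith
    exact le_trans (min_le_left _ _) h2
  · push_neg at hx
    have hex : (1:ℝ) ≤ Real.exp x := Real.one_le_exp hx.le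
    set s : ℝ := 1 / (1 + Real.exp x) with hs
    have hspos : 0 < s := by positivity
    have hshalf : s ≤ 1/2 := by
      rw [hs]
      rw [div_le_div_iff₀ (by positivity) (by norm_num)]
      linarith
    -- log (1 - s) ≥ -2 s log 2 by concavity of log
    have hconc := strictConcaveOn_log_Ioi.concaveOn.2
      (Set.mem_Ioi.mpr one_pos) (Set.mem_Ioi.mpr (by norm_num : (0:ℝ) < 1/2))
      (by linarith : (0:ℝ) ≤ 1 - 2*s) (by linarith : (0:ℝ) ≤ 2*s)
      (by ring : (1 - 2*s) + 2*s = 1)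
    simp only [smul_eq_mul, Real.log_one, mul_one, mul_zero] at hconc
    have hlog2 : Real.log (1/2 : ℝ) = -Real.log 2 := by
      rw [Real.log_div one_ne_zero (by norm_num), Real.log_one]; ring
    rw [hlog2, show (1 - 2*s + 2*s*(1/2) : ℝ) = 1 - s by ring] at hconc
    -- hconc : (1-2s)*0 + 2s * (-log 2) ≤ log (1-s), i.e. -2s log2 ≤ log(1-s)
    have hll : logisticLoss x = -Real.log (1 - s) := by
      have h1s : 1 - s = Real.exp x / (1 + Real.exp x) := by
        rw [hs]; field_simp; ring
      rw [h1s, Real.log_div (Real.exp_ne_zero x) (by positivity), Real.log_exp]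
      unfold logisticLoss
      rw [show 1 + Real.exp (-x) = (1 + Real.exp x) / Real.exp x by
        rw [Real.exp_neg]; field_simp; ring]
      rw [Real.log_div (by positivity) (Real.exp_ne_zero x), Real.log_exp]
      ring
    have hlog2pos : 0 < Real.log 2 := Real.log_pos (by norm_num)
    have key : logisticLoss x ≤ 2 * Real.log 2 * s := by
      rw [hll]; nlinarith [hconc]
    have : logisticLoss x / (2 * Real.log 2) ≤ s := by
      rw [div_le_iff₀ (by positivity)]
      linarith [key]
    exact le_trans (min_le_right _ _) this
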